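/- For any x ∈ 𝒯 and any z,w ∈ R(x), there exists a geodesic γ ∈ G such that {x,z,w} ⊂ {γ_s : s ∈ [0,1]}. Moreover, if γ̂ ∈ G also satisfies {x,z,w} ⊂ {γ̂_s : s ∈ [0,1]}, then there exists γ̃ ∈ G with ({γ̂_s : s ∈ [0,1]} ∪ {γ_s : s ∈ [0,1]}) ⊂ {γ̃_s : s ∈ [0,1]}. -/
import Mathlib


open Set MeasureTheory

variable {X : Type*}

/-- A geodesic parametrized on `[0,1]`. -/
def IsGeodesic [MetricSpace X] (γ : ℝ → X) : Prop :=
  ∀ s ∈ Set.Icc (0:ℝ) 1, ∀ t ∈ Set.Icc (0:ℝ) 1,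
    dist (γ s) (γ t) = |s - t| * dist (γ 0) (γ 1)

/-- `(X,d)` is a geodesic space. -/
def GeodesicSpace (X : Type*) [MetricSpace X] : Prop :=
  ∀ x y : X, ∃ γ : ℝ → X, IsGeodesic γ ∧ γ 0 = x ∧ γ 1 = y

/-- `Γ = {(x,y) : φ(x) - φ(y) = d(x,y)}`. -/
def Gamma [MetricSpace X] (φ : X → ℝ) : Set (X × X) :=
  {p | φ p.1 - φ p.2 = dist p.1 p.2}

/-- `Γ⁻¹`. -/
def GammaInv [MetricSpace X] (φ : X → ℝ) : Set (X × X) :=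
  {p | (p.2, p.1) ∈ Gamma φ}

/-- The set of transport rays `R = Γ ∪ Γ⁻¹`. -/
def Rays [MetricSpace X] (φ : X → ℝ) : Set (X × X) :=
  Gamma φ ∪ GammaInv φ

/-- `Γ(x)`. -/
def GammaOf [MetricSpace X] (φ : X → ℝ) (x : X) : Set X := {y | (x, y) ∈ Gamma φ}

/-- `Γ⁻¹(x)`. -/
def GammaInvOf [MetricSpace X] (φ : X → ℝ) (x : X) : Set X := {y | (x, y) ∈ GammaInv φ}

/-- `R(x) = Γ(x) ∪ Γ⁻¹(x)`. -/
def RayOf [MetricSpace X] (φ : X → ℝ) (x : X) : Set X := GammaOf φ x ∪ GammaInvOf φ x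

/-- The transport set with end points `𝒯_e`. -/
def Te [MetricSpace X] (φ : X → ℝ) : Set X :=
  (Prod.fst '' (Gamma φ \ {p : X × X | p.1 = p.2})) ∪
    (Prod.fst '' (GammaInv φ \ {p : X × X | p.1 = p.2}))

/-- The set of forward branching points `A₊`. -/
def Aplus [MetricSpace X] (φ : X → ℝ) : Set X :=
  {x | x ∈ Te φ ∧ ∃ z ∈ GammaOf φ x, ∃ w ∈ GammaOf φ x, (z, w) ∉ Rays φ}

/-- The set of backward branching points `A₋`. -/
def Aminus [MetricSpace X] (φ : X → ℝ) : Set X :=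
  {x | x ∈ Te φ ∧ ∃ z ∈ GammaInvOf φ x, ∃ w ∈ GammaInvOf φ x, (z, w) ∉ Rays φ}

/-- The transport set `𝒯 = 𝒯_e \ (A₊ ∪ A₋)`. -/
def Tset [MetricSpace X] (φ : X → ℝ) : Set X := Te φ \ (Aplus φ ∪ Aminus φ)

section Aux

variable [MetricSpace X] {φ : X → ℝ}

lemma lip_le (hφ : LipschitzWith 1 φ) (p q : X) : φ p - φ q ≤ dist p q := by
  calc φ p - φ q ≤ |φ p - φ q| := le_abs_self _
    _ ≤ dist p q := by simpa [Real.dist_eq] using hφ.dist_le_mul p q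

lemma gamma_refl (a : X) : (a, a) ∈ Gamma φ := by simp [Gamma]

lemma gamma_trans (hφ : LipschitzWith 1 φ) {p q r : X}
    (h1 : (p, q) ∈ Gamma φ) (h2 : (q, r) ∈ Gamma φ) : (p, r) ∈ Gamma φ := by
  have h1' : φ p - φ q = dist p q := h1
  have h2' : φ q - φ r = dist q r := h2
  have hl := lip_le hφ p r
  have htr := dist_triangle p q r
  show φ p - φ r = dist p r
  linarith

lemma gamma_mono (hφ : LipschitzWith 1 φ) {γ : ℝ → X} (hg : IsGeodesic γ)
    (he : (γ 0, γ 1) ∈ Gamma φ) {s t : ℝ} (hs : s ∈ Icc (0:ℝ) 1)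
    (ht : t ∈ Icc (0:ℝ) 1) (hst : s ≤ t) : (γ s, γ t) ∈ Gamma φ := by
  have h01 : (0:ℝ) ∈ Icc (0:ℝ) 1 := by norm_num
  have h11 : (1:ℝ) ∈ Icc (0:ℝ) 1 := by norm_num
  have hL0 : 0 ≤ dist (γ 0) (γ 1) := dist_nonneg
  have he' : φ (γ 0) - φ (γ 1) = dist (γ 0) (γ 1) := he
  have d1 : dist (γ 0) (γ s) = s * dist (γ 0) (γ 1) := by
    rw [hg 0 h01 s hs, abs_of_nonpos (by linarith [hs.1] : (0:ℝ) - s ≤ 0)]; ring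
  have d2 : dist (γ s) (γ t) = (t - s) * dist (γ 0) (γ 1) := by
    rw [hg s hs t ht, abs_of_nonpos (by linarith : s - t ≤ 0)]; ring
  have d3 : dist (γ t) (γ 1) = (1 - t) * dist (γ 0) (γ 1) := by
    rw [hg t ht 1 h11, abs_of_nonpos (by linarith [ht.2] : t - 1 ≤ 0)]; ring
  have a1 := lip_le hφ (γ 0) (γ s)
  have a2 := lip_le hφ (γ s) (γ t)
  have a3 := lip_le hφ (γ t) (γ 1)
  show φ (γ s) - φ (γ t) = dist (γ s) (γ t)
  rw [d2]; rw [d2] at a2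
  linarith [d1 ▸ a1, d3 ▸ a3]

lemma phi_on (hφ : LipschitzWith 1 φ) {γ : ℝ → X} (hg : IsGeodesic γ)
    (he : (γ 0, γ 1) ∈ Gamma φ) {t : ℝ} (ht : t ∈ Icc (0:ℝ) 1) :
    φ (γ t) = φ (γ 0) - t * dist (γ 0) (γ 1) := by
  have h01 : (0:ℝ) ∈ Icc (0:ℝ) 1 := by norm_num
  have h : φ (γ 0) - φ (γ t) = dist (γ 0) (γ t) :=
    gamma_mono hφ hg he h01 ht ht.1
  have d : dist (γ 0) (γ t) = t * dist (γ 0) (γ 1) := by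
    rw [hg 0 h01 t ht, abs_of_nonpos (by linarith [ht.1] : (0:ℝ) - t ≤ 0)]; ring
  linarith [d ▸ h]

lemma rays_dist {p q : X} (h : (p, q) ∈ Rays φ) : dist p q = |φ p - φ q| := by
  rcases h with h | h
  · have h' : φ p - φ q = dist p q := h
    rw [← h', abs_of_nonneg (by rw [h']; exact dist_nonneg)]
  · have h' : φ q - φ p = dist q p := h
    rw [dist_comm, ← h', abs_of_nonpos (by linarith [h' ▸ dist_nonneg (x := q) (y := p)])]
    ring

lemma chainR (hφ : LipschitzWith 1 φ) {x z w : X} (hx : x ∈ Tset φ)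
    (hz : z ∈ RayOf φ x) (hw : w ∈ RayOf φ x) : (z, w) ∈ Rays φ := by
  obtain ⟨hxe, hxb⟩ := hx
  rcases hz with hz | hz <;> rcases hw with hw | hw
  · by_contra hc; exact hxb (Or.inl ⟨hxe, z, hz, w, hw, hc⟩)
  · exact Or.inr (gamma_trans hφ hw hz)
  · exact Or.inl (gamma_trans hφ hz hw)
  · by_contra hc; exact hxb (Or.inr ⟨hxe, z, hz, w, hw, hc⟩)

lemma mem_ray (hφ : LipschitzWith 1 φ) {γ : ℝ → X} (hg : IsGeodesic γ)
    (he : (γ 0, γ 1) ∈ Gamma φ) {x p : X} (hxm : x ∈ γ '' Icc 0 1)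
    (hpm : p ∈ γ '' Icc 0 1) : p ∈ RayOf φ x := by
  obtain ⟨s, hs, rfl⟩ := hxm
  obtain ⟨t, ht, rfl⟩ := hpm
  rcases le_total s t with h | h
  · exact Or.inl (gamma_mono hφ hg he hs ht h)
  · exact Or.inr (gamma_mono hφ hg he ht hs h)

lemma sub_ray (hφ : LipschitzWith 1 φ) {γ : ℝ → X} (hg : IsGeodesic γ)
    (he : (γ 0, γ 1) ∈ Gamma φ) {x : X}
    (h : (x, γ 0) ∈ Gamma φ ∨ (γ 1, x) ∈ Gamma φ) :
    γ '' Icc 0 1 ⊆ RayOf φ x := by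
  rintro p ⟨t, ht, rfl⟩
  have h01 : (0:ℝ) ∈ Icc (0:ℝ) 1 := by norm_num
  have h11 : (1:ℝ) ∈ Icc (0:ℝ) 1 := by norm_num
  have h0 := gamma_mono hφ hg he h01 ht ht.1
  have h1 := gamma_mono hφ hg he ht h11 ht.2
  rcases h with h | h
  · exact Or.inl (gamma_trans hφ h h0)
  · exact Or.inr (gamma_trans hφ h1 h)

lemma merge (hφ : LipschitzWith 1 φ) {x : X} (hx : x ∈ Tset φ)
    {γ γ' : ℝ → X} (hg : IsGeodesic γ) (hg' : IsGeodesic γ')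
    (he : (γ 0, γ 1) ∈ Gamma φ) (he' : (γ' 0, γ' 1) ∈ Gamma φ)
    (hr : γ '' Icc 0 1 ⊆ RayOf φ x) (hr' : γ' '' Icc 0 1 ⊆ RayOf φ x)
    {m : ℝ} (hm1 : φ (γ 1) ≤ m) (hm0 : m ≤ φ (γ 0))
    (hm1' : φ (γ' 1) ≤ m) (hm0' : m ≤ φ (γ' 0)) :
    ∃ γ'' : ℝ → X, IsGeodesic γ'' ∧ (γ'' 0, γ'' 1) ∈ Gamma φ ∧
      γ '' Icc 0 1 ∪ γ' '' Icc 0 1 ⊆ γ'' '' Icc 0 1 := by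
  have h01 : (0:ℝ) ∈ Icc (0:ℝ) 1 := by norm_num
  have h11 : (1:ℝ) ∈ Icc (0:ℝ) 1 := by norm_num
  set S := γ '' Icc 0 1 ∪ γ' '' Icc 0 1 with hS
  have hSR : S ⊆ RayOf φ x := union_subset hr hr'
  have key : ∀ p ∈ S, ∀ q ∈ S, dist p q = |φ p - φ q| := fun p hp q hq =>
    rays_dist (chainR hφ hx (hSR hp) (hSR hq))
  have hL0 : (0:ℝ) ≤ dist (γ 0) (γ 1) := dist_nonneg
  have hL0' : (0:ℝ) ≤ dist (γ' 0) (γ' 1) := dist_nonneg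
  have hφ1 : φ (γ 1) = φ (γ 0) - dist (γ 0) (γ 1) := by
    have := phi_on hφ hg he h11; simpa using this
  have hφ1' : φ (γ' 1) = φ (γ' 0) - dist (γ' 0) (γ' 1) := by
    have := phi_on hφ hg' he' h11; simpa using this
  set A := max (φ (γ 0)) (φ (γ' 0)) with hA
  set C := min (φ (γ 1)) (φ (γ' 1)) with hC
  set D := A - C with hD
  have hA0 : φ (γ 0) ≤ A := le_max_left _ _
  have hA0' : φ (γ' 0) ≤ A := le_max_right _ _
  have hC0 : C ≤ φ (γ 1) := min_le_left _ _
  have hC0' : C ≤ φ (γ' 1) := min_le_right _ _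
  have hD0 : (0:ℝ) ≤ D := by simp only [hD]; linarith
  have hrange : ∀ p ∈ S, C ≤ φ p ∧ φ p ≤ A := by
    rintro p (⟨t, ht, rfl⟩ | ⟨t, ht, rfl⟩)
    · rw [phi_on hφ hg he ht]
      have h1 := mul_le_mul_of_nonneg_right ht.2 hL0
      have h2 := mul_nonneg ht.1 hL0
      constructor <;> [skip; skip] <;> nlinarith
    · rw [phi_on hφ hg' he' ht]
      have h1 := mul_le_mul_of_nonneg_right ht.2 hL0'
      have h2 := mul_nonneg ht.1 hL0'
      constructor <;> [skip; skip] <;> nlinarith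
  by_cases hDz : D = 0
  · refine ⟨γ, hg, he, ?_⟩
    intro p hp
    have h1 := hrange p hp
    have h2 := hrange (γ 0) (Or.inl ⟨0, h01, rfl⟩)
    have heq : φ p = φ (γ 0) := by
      have : A = C := by simp only [hD] at hDz; linarith
      linarith [h1.1, h1.2, h2.1, h2.2]
    have hd := key p hp (γ 0) (Or.inl ⟨0, h01, rfl⟩)
    rw [heq, sub_self, abs_zero] at hd
    exact ⟨0, h01, (dist_eq_zero.mp hd).symm⟩
  · have hDpos : (0:ℝ) < D := lt_of_le_of_ne hD0 (Ne.symm hDz)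
    set g : ℝ → X := fun t =>
      if φ (γ 1) ≤ A - t * D ∧ A - t * D ≤ φ (γ 0) then
        γ ((φ (γ 0) - (A - t * D)) / dist (γ 0) (γ 1))
      else γ' ((φ (γ' 0) - (A - t * D)) / dist (γ' 0) (γ' 1)) with hgdef
    have hkey : ∀ t ∈ Icc (0:ℝ) 1, g t ∈ S ∧ φ (g t) = A - t * D := by
      intro t ht
      set v := A - t * D with hv
      have hvC : C ≤ v := by
        have := mul_le_mul_of_nonneg_right ht.2 hD0
        simp only [hv, hD]; nlinarith
      have hvA : v ≤ A := by
        have := mul_nonneg ht.1 hD0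
        simp only [hv]; linarith
      by_cases hcond : φ (γ 1) ≤ v ∧ v ≤ φ (γ 0)
      · have hgt : g t = γ ((φ (γ 0) - v) / dist (γ 0) (γ 1)) := if_pos hcond
        set u := (φ (γ 0) - v) / dist (γ 0) (γ 1) with hu
        have hu01 : u ∈ Icc (0:ℝ) 1 := by
          rcases eq_or_lt_of_le hL0 with h | h
          · simp only [hu, ← h, div_zero]; exact h01
          · constructor
            · exact div_nonneg (by linarith [hcond.2]) hL0
            · rw [hu, div_le_one h]; linarith [hcond.1, hφ1]
        have huL : u * dist (γ 0) (γ 1) = φ (γ 0) - v := by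
          rcases eq_or_lt_of_le hL0 with h | h
          · have hvphi : v = φ (γ 0) := by
              have := hcond.1; have := hcond.2; rw [hφ1] at *; linarith
            rw [← h, mul_zero, hvphi, sub_self]
          · rw [hu, div_mul_cancel₀ _ (ne_of_gt h)]
        refine ⟨hgt ▸ Or.inl ⟨u, hu01, rfl⟩, ?_⟩
        rw [hgt, phi_on hφ hg he hu01, huL]; ring
      · have hgt : g t = γ' ((φ (γ' 0) - v) / dist (γ' 0) (γ' 1)) := if_neg hcond
        have hv' : φ (γ' 1) ≤ v ∧ v ≤ φ (γ' 0) := by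
          rcases not_and_or.mp hcond with h | h
          · push_neg at h
            constructor
            · rcases min_cases (φ (γ 1)) (φ (γ' 1)) with ⟨hc, _⟩ | ⟨hc, _⟩
              · rw [hC] at hvC; linarith [hc ▸ hvC]
              · rw [hC] at hvC; linarith [hc ▸ hvC]
            · linarith
          · push_neg at h
            constructor
            · linarith
            · rcases max_cases (φ (γ 0)) (φ (γ' 0)) with ⟨hc, _⟩ | ⟨hc, _⟩
              · rw [hA] at hvA; linarith [hc ▸ hvA]
              · rw [hA] at hvA; linarith [hc ▸ hvA]
        set u := (φ (γ' 0) - v) / dist (γ' 0) (γ' 1) with hu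
        have hu01 : u ∈ Icc (0:ℝ) 1 := by
          rcases eq_or_lt_of_le hL0' with h | h
          · simp only [hu, ← h, div_zero]; exact h01
          · constructor
            · exact div_nonneg (by linarith [hv'.2]) hL0'
            · rw [hu, div_le_one h]; linarith [hv'.1, hφ1']
        have huL : u * dist (γ' 0) (γ' 1) = φ (γ' 0) - v := by
          rcases eq_or_lt_of_le hL0' with h | h
          · have hvphi : v = φ (γ' 0) := by
              have := hv'.1; have := hv'.2; rw [hφ1'] at *; linarith
            rw [← h, mul_zero, hvphi, sub_self]
          · rw [hu, div_mul_cancel₀ _ (ne_of_gt h)]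
        refine ⟨hgt ▸ Or.inr ⟨u, hu01, rfl⟩, ?_⟩
        rw [hgt, phi_on hφ hg' he' hu01, huL]; ring
    have hg0 : φ (g 0) = A := by have := (hkey 0 h01).2; rw [this]; ring
    have hg1 : φ (g 1) = C := by
      have := (hkey 1 h11).2; rw [this, hD]; ring
    have hgeo : IsGeodesic g := by
      intro s hs t ht
      rw [key _ (hkey s hs).1 _ (hkey t ht).1, key _ (hkey 0 h01).1 _ (hkey 1 h11).1,
        (hkey s hs).2, (hkey t ht).2, (hkey 0 h01).2, (hkey 1 h11).2,
        show (A - s * D) - (A - t * D) = (t - s) * D by ring,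
        show (A - 0 * D) - (A - 1 * D) = D by ring,
        abs_mul, abs_of_nonneg hD0, abs_sub_comm t s]
    have hGam : (g 0, g 1) ∈ Gamma φ := by
      show φ (g 0) - φ (g 1) = dist (g 0) (g 1)
      rw [key _ (hkey 0 h01).1 _ (hkey 1 h11).1, hg0, hg1,
        abs_of_nonneg (by linarith : (0:ℝ) ≤ A - C)]
    refine ⟨g, hgeo, hGam, ?_⟩
    intro p hp
    have hpA := hrange p hp
    set t := (A - φ p) / D with htd
    have ht : t ∈ Icc (0:ℝ) 1 := by
      constructor
      · exact div_nonneg (by linarith [hpA.2]) hD0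
      · rw [htd, div_le_one hDpos]; linarith [hpA.1]
    have hφt : φ (g t) = φ p := by
      rw [(hkey t ht).2, htd, div_mul_cancel₀ _ (ne_of_gt hDpos)]; ring
    have hdz : dist (g t) p = 0 := by
      rw [key _ (hkey t ht).1 _ hp, hφt, sub_self, abs_zero]
    exact ⟨t, ht, dist_eq_zero.mp hdz⟩

end Aux

theorem stmt4 [MetricSpace X]
    (hproper : ProperSpace X) (hgeod : GeodesicSpace X)
    (φ : X → ℝ) (hφ : LipschitzWith 1 φ)
    (x : X) (hx : x ∈ Tset φ)
    (z w : X) (hz : z ∈ RayOf φ x) (hw : w ∈ RayOf φ x) :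
    ∃ γ : ℝ → X, IsGeodesic γ ∧ (γ 0, γ 1) ∈ Gamma φ ∧
      ({x, z, w} : Set X) ⊆ γ '' Set.Icc 0 1 ∧
      ∀ γ' : ℝ → X, IsGeodesic γ' → (γ' 0, γ' 1) ∈ Gamma φ →
        ({x, z, w} : Set X) ⊆ γ' '' Set.Icc 0 1 →
        ∃ γ'' : ℝ → X, IsGeodesic γ'' ∧ (γ'' 0, γ'' 1) ∈ Gamma φ ∧
          γ '' Set.Icc 0 1 ∪ γ' '' Set.Icc 0 1 ⊆ γ'' '' Set.Icc 0 1 := by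
  have h01 : (0:ℝ) ∈ Icc (0:ℝ) 1 := by norm_num
  have h11 : (1:ℝ) ∈ Icc (0:ℝ) 1 := by norm_num
  have hxx : x ∈ RayOf φ x := Or.inl (gamma_refl x)
  have key2 : ∀ p q : X, p ∈ RayOf φ x → q ∈ RayOf φ x → φ q ≤ φ p →
      (p, q) ∈ Gamma φ := by
    intro p q hp hq hle
    rcases chainR hφ hx hp hq with h | h
    · exact h
    · have h' : φ q - φ p = dist q p := h
      have hd : dist q p = 0 := le_antisymm (by linarith) dist_nonneg
      have : q = p := dist_eq_zero.mp hd
      subst this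
      exact gamma_refl q
  suffices H : ∀ p1 p2 p3 : X, ({x, z, w} : Set X) ⊆ {p1, p2, p3} →
      (x = p1 ∨ x = p2 ∨ x = p3) → (p1, p2) ∈ Gamma φ → (p2, p3) ∈ Gamma φ →
      (∃ γ : ℝ → X, IsGeodesic γ ∧ (γ 0, γ 1) ∈ Gamma φ ∧
        ({x, z, w} : Set X) ⊆ γ '' Set.Icc 0 1 ∧
        ∀ γ' : ℝ → X, IsGeodesic γ' → (γ' 0, γ' 1) ∈ Gamma φ →
          ({x, z, w} : Set X) ⊆ γ' '' Set.Icc 0 1 →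
          ∃ γ'' : ℝ → X, IsGeodesic γ'' ∧ (γ'' 0, γ'' 1) ∈ Gamma φ ∧
            γ '' Set.Icc 0 1 ∪ γ' '' Set.Icc 0 1 ⊆ γ'' '' Set.Icc 0 1) by
    have hsub : ∀ a b c : X, ({a, b, c} : Set X) = ({x, z, w} : Set X) →
        ({x, z, w} : Set X) ⊆ {a, b, c} := fun a b c h => h ▸ subset_rfl
    rcases le_total (φ z) (φ w) with h1 | h1 <;>
      rcases le_total (φ x) (φ z) with h2 | h2 <;>
      rcases le_total (φ x) (φ w) with h3 | h3
    · exact H w z x (by intro a ha; simp only [mem_insert_iff, mem_singleton_iff] at *; tauto)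
        (Or.inr (Or.inr rfl)) (key2 w z hw hz h1) (key2 z x hz hxx h2)
    · exact H w z x (by intro a ha; simp only [mem_insert_iff, mem_singleton_iff] at *; tauto)
        (Or.inr (Or.inr rfl)) (key2 w z hw hz h1) (key2 z x hz hxx h2)
    · exact H w x z (by intro a ha; simp only [mem_insert_iff, mem_singleton_iff] at *; tauto)
        (Or.inr (Or.inl rfl)) (key2 w x hw hxx h3) (key2 x z hxx hz h2)
    · exact H x w z (by intro a ha; simp only [mem_insert_iff, mem_singleton_iff] at *; tauto)
        (Or.inl rfl) (key2 x w hxx hw h3) (key2 w z hw hz h1)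
    · exact H z w x (by intro a ha; simp only [mem_insert_iff, mem_singleton_iff] at *; tauto)
        (Or.inr (Or.inr rfl)) (key2 z w hz hw h1) (key2 w x hw hxx h3)
    · exact H z x w (by intro a ha; simp only [mem_insert_iff, mem_singleton_iff] at *; tauto)
        (Or.inr (Or.inl rfl)) (key2 z x hz hxx h2) (key2 x w hxx hw h3)
    · exact H z x w (by intro a ha; simp only [mem_insert_iff, mem_singleton_iff] at *; tauto)
        (Or.inr (Or.inl rfl)) (key2 z x hz hxx (by linarith)) (key2 x w hxx hw (by linarith))
    · exact H x z w (by intro a ha; simp only [mem_insert_iff, mem_singleton_iff] at *; tauto)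
        (Or.inl rfl) (key2 x z hxx hz h2) (key2 z w hz hw h1)
  intro p1 p2 p3 hsub hxp h12 h23
  obtain ⟨σ, hσ, hσ0, hσ1⟩ := hgeod p1 p2
  obtain ⟨τ, hτ, hτ0, hτ1⟩ := hgeod p2 p3
  have heσ : (σ 0, σ 1) ∈ Gamma φ := by rw [hσ0, hσ1]; exact h12
  have heτ : (τ 0, τ 1) ∈ Gamma φ := by rw [hτ0, hτ1]; exact h23
  have hrσ : σ '' Icc 0 1 ⊆ RayOf φ x := by
    apply sub_ray hφ hσ heσ
    rcases hxp with rfl | rfl | rfl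
    · left; rw [hσ0]; exact gamma_refl x
    · right; rw [hσ1]; exact gamma_refl x
    · right; rw [hσ1]; exact h23
  have hrτ : τ '' Icc 0 1 ⊆ RayOf φ x := by
    apply sub_ray hφ hτ heτ
    rcases hxp with rfl | rfl | rfl
    · left; rw [hτ0]; exact h12
    · left; rw [hτ0]; exact gamma_refl x
    · right; rw [hτ1]; exact gamma_refl x
  have h12' : φ p2 ≤ φ p1 := by
    have h : φ p1 - φ p2 = dist p1 p2 := h12
    linarith [h ▸ dist_nonneg (x := p1) (y := p2)]
  have h23' : φ p3 ≤ φ p2 := by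
    have h : φ p2 - φ p3 = dist p2 p3 := h23
    linarith [h ▸ dist_nonneg (x := p2) (y := p3)]
  obtain ⟨γ, hγg, hγe, hγs⟩ :=
    merge hφ hx hσ hτ heσ heτ hrσ hrτ (m := φ p2)
      (by rw [hσ1]) (by rw [hσ0]; exact h12') (by rw [hτ1]; exact h23') (by rw [hτ0])
  have hxin : ({x, z, w} : Set X) ⊆ γ '' Icc 0 1 := by
    intro a ha
    apply hγs
    rcases hsub ha with rfl | rfl | rfl
    · exact Or.inl ⟨0, h01, hσ0⟩
    · exact Or.inl ⟨1, h11, hσ1⟩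
    · exact Or.inr ⟨1, h11, hτ1⟩
  refine ⟨γ, hγg, hγe, hxin, ?_⟩
  intro γ' hγ'g hγ'e hsub'
  have hxγ : x ∈ γ '' Icc 0 1 := hxin (Or.inl rfl)
  have hxγ' : x ∈ γ' '' Icc 0 1 := hsub' (Or.inl rfl)
  have hrγ : γ '' Icc 0 1 ⊆ RayOf φ x := fun p hp => mem_ray hφ hγg hγe hxγ hp
  have hrγ' : γ' '' Icc 0 1 ⊆ RayOf φ x := fun p hp => mem_ray hφ hγ'g hγ'e hxγ' hp
  have hb : ∀ δ : ℝ → X, IsGeodesic δ → (δ 0, δ 1) ∈ Gamma φ →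
      x ∈ δ '' Icc 0 1 → φ (δ 1) ≤ φ x ∧ φ x ≤ φ (δ 0) := by
    rintro δ hδ hδe ⟨t, ht, heq⟩
    have h0 : φ (δ 0) - φ (δ t) = dist (δ 0) (δ t) :=
      gamma_mono hφ hδ hδe h01 ht ht.1
    have h1 : φ (δ t) - φ (δ 1) = dist (δ t) (δ 1) :=
      gamma_mono hφ hδ hδe ht h11 ht.2
    rw [heq] at h0 h1
    constructor
    · linarith [h1 ▸ dist_nonneg (x := x) (y := δ 1)]
    · linarith [h0 ▸ dist_nonneg (x := δ 0) (y := x)]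
  obtain ⟨hb1, hb0⟩ := hb γ hγg hγe hxγ
  obtain ⟨hb1', hb0'⟩ := hb γ' hγ'g hγ'e hxγ'
  exact merge hφ hx hγg hγ'g hγe hγ'e hrγ hrγ' (m := φ x) hb1 hb0 hb1' hb0'
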